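/- With the setup of the unbiasedness lemma (S nonempty finite, r : S → (0,1] with distinct values p₁ < ... < pₙ, p₀ := 0, q_i := q(D(S;p_i,r)), q(∅) = 0, and estimator ê equal to Σ_{j=i+1}^{n} (q_{j−1} − q_j)/p_j on the event U ∈ [p_i, p_{i+1}) and 0 on U ≥ pₙ), the variance of ê under U uniform on [0,1) equals q₀²(1/pₙ − 1) + Σ_{j=1}^{n−1} (q₀ − q_j)²(1/p_j − 1/p_{j+1}), where q₀ = q(S). -/

import Mathlib

open MeasureTheory

private lemma mean_alg (p d : ℕ → ℝ) (hp0 : p 0 = 0) (hd0 : d 0 = 0) :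
    ∀ n : ℕ, (∀ j < n, p (j+1) ≠ 0) →
    ∑ i ∈ Finset.range n,
        (∑ j ∈ Finset.Ico i n, (d (j+1) - d j)/p (j+1)) * (p (i+1) - p i) = d n := by
  intro n
  induction n with
  | zero => intro _; simp [hd0]
  | succ n ih =>
    intro hpne
    have h1 : ∀ i ∈ Finset.range (n+1),
        (∑ j ∈ Finset.Ico i (n+1), (d (j+1) - d j)/p (j+1)) * (p (i+1) - p i)
        = (∑ j ∈ Finset.Ico i n, (d (j+1) - d j)/p (j+1)) * (p (i+1) - p i)
          + ((d (n+1) - d n)/p (n+1)) * (p (i+1) - p i) := by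
      intro i hi
      rw [Finset.sum_Ico_succ_top (Nat.lt_succ_iff.mp (Finset.mem_range.mp hi)), add_mul]
    rw [Finset.sum_congr rfl h1, Finset.sum_add_distrib, ← Finset.mul_sum,
      Finset.sum_range_sub p, Finset.sum_range_succ, Finset.Ico_self, hp0, sub_zero]
    simp only [Finset.sum_empty, zero_mul, add_zero]
    rw [ih (fun j hj => hpne j (Nat.lt_succ_of_lt hj)),
      div_mul_cancel₀ _ (hpne n (Nat.lt_succ_self n))]
    ring

private lemma var_alg (p d : ℕ → ℝ) (hp0 : p 0 = 0) (hd0 : d 0 = 0) :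
    ∀ n : ℕ, (∀ j < n, p (j+1) ≠ 0) →
    ∑ i ∈ Finset.range n,
        (∑ j ∈ Finset.Ico i n, (d (j+1) - d j)/p (j+1))^2 * (p (i+1) - p i)
      = d n ^ 2 / p n + ∑ j ∈ Finset.range n, d j ^ 2 * (1/p j - 1/p (j+1)) := by
  intro n
  induction n with
  | zero => simp [hd0, hp0]
  | succ n ih =>
    intro hpne
    have hpnen : ∀ j < n, p (j+1) ≠ 0 := fun j hj => hpne j (Nat.lt_succ_of_lt hj)
    have hpn1 : p (n+1) ≠ 0 := hpne n (Nat.lt_succ_self n)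
    set t : ℝ := (d (n+1) - d n)/p (n+1) with ht
    have h1 : ∀ i ∈ Finset.range (n+1),
        (∑ j ∈ Finset.Ico i (n+1), (d (j+1) - d j)/p (j+1))^2 * (p (i+1) - p i)
        = (∑ j ∈ Finset.Ico i n, (d (j+1) - d j)/p (j+1))^2 * (p (i+1) - p i)
          + 2 * t * ((∑ j ∈ Finset.Ico i n, (d (j+1) - d j)/p (j+1)) * (p (i+1) - p i))
          + t^2 * (p (i+1) - p i) := by
      intro i hi
      rw [Finset.sum_Ico_succ_top (Nat.lt_succ_iff.mp (Finset.mem_range.mp hi))]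
      ring
    rw [Finset.sum_congr rfl h1, Finset.sum_add_distrib, Finset.sum_add_distrib,
      ← Finset.mul_sum, ← Finset.mul_sum, Finset.sum_range_sub p, hp0, sub_zero]
    have h2 : ∑ i ∈ Finset.range (n+1),
        (∑ j ∈ Finset.Ico i n, (d (j+1) - d j)/p (j+1))^2 * (p (i+1) - p i)
        = d n ^ 2 / p n + ∑ j ∈ Finset.range n, d j ^ 2 * (1/p j - 1/p (j+1)) := by
      rw [Finset.sum_range_succ, Finset.Ico_self]
      simp only [Finset.sum_empty, ne_eq, zero_pow, zero_mul, add_zero, OfNat.ofNat_ne_zero,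
        not_false_eq_true]
      exact ih hpnen
    have h3 : ∑ i ∈ Finset.range (n+1),
        (∑ j ∈ Finset.Ico i n, (d (j+1) - d j)/p (j+1)) * (p (i+1) - p i) = d n := by
      rw [Finset.sum_range_succ, Finset.Ico_self]
      simp only [Finset.sum_empty, zero_mul, add_zero]
      exact mean_alg p d hp0 hd0 n hpnen
    rw [h2, h3, Finset.sum_range_succ]
    have key : 2 * t * d n + t ^ 2 * p (n+1)
        = d (n+1) ^ 2 / p (n+1) - d n ^ 2 / p (n+1) := by
      rw [ht]; field_simp; ring
    have hsplit : d n ^ 2 * (1/p n - 1/p (n+1)) = d n ^2 / p n - d n ^2 / p (n+1) := by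
      rw [mul_sub, mul_one_div, mul_one_div]
    rw [hsplit]
    linarith [key]

private lemma final_alg (n : ℕ) (hn : 1 ≤ n) (p Q : ℕ → ℝ) (C : ℝ) (hp0 : p 0 = 0)
    (hpne : ∀ j < n, p (j + 1) ≠ 0) (hQ0 : Q 0 = C) (hQn : Q n = 0) :
    ∑ i ∈ Finset.range n,
        ((∑ j ∈ Finset.Ico i n, (Q j - Q (j + 1)) / p (j + 1)) - C) ^ 2 * (p (i + 1) - p i)
      + C ^ 2 * (1 - p n)
    = C ^ 2 * (1 / p n - 1)
      + ∑ j ∈ Finset.Ico 1 n, (C - Q j) ^ 2 * (1 / p j - 1 / p (j + 1)) := by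
  set d : ℕ → ℝ := fun j => C - Q j with hd
  have hd0 : d 0 = 0 := by simp [hd, hQ0]
  have hdn : d n = C := by simp [hd, hQn]
  have hterm : ∀ j : ℕ, (Q j - Q (j + 1)) / p (j + 1) = (d (j + 1) - d j) / p (j + 1) := by
    intro j; simp only [hd]; ring_nf
  have hrw : ∀ i, (∑ j ∈ Finset.Ico i n, (Q j - Q (j + 1)) / p (j + 1))
      = ∑ j ∈ Finset.Ico i n, (d (j + 1) - d j) / p (j + 1) :=
    fun i => Finset.sum_congr rfl (fun j _ => hterm j)
  simp only [hrw]
  have hexp : ∀ i ∈ Finset.range n,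
      ((∑ j ∈ Finset.Ico i n, (d (j + 1) - d j) / p (j + 1)) - C) ^ 2 * (p (i + 1) - p i)
      = (∑ j ∈ Finset.Ico i n, (d (j + 1) - d j) / p (j + 1)) ^ 2 * (p (i + 1) - p i)
        - 2 * C * ((∑ j ∈ Finset.Ico i n, (d (j + 1) - d j) / p (j + 1)) * (p (i + 1) - p i))
        + C ^ 2 * (p (i + 1) - p i) := by
    intro i _; ring
  rw [Finset.sum_congr rfl hexp, Finset.sum_add_distrib, Finset.sum_sub_distrib,
    ← Finset.mul_sum, ← Finset.mul_sum, Finset.sum_range_sub p, hp0, sub_zero,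
    mean_alg p d hp0 hd0 n hpne, var_alg p d hp0 hd0 n hpne, hdn]
  have hsum : ∑ j ∈ Finset.range n, d j ^ 2 * (1 / p j - 1 / p (j + 1))
      = ∑ j ∈ Finset.Ico 1 n, d j ^ 2 * (1 / p j - 1 / p (j + 1)) := by
    rw [Finset.range_eq_Ico, ← Finset.sum_Ico_consecutive _ (Nat.zero_le 1) hn]
    have h01 : Finset.Ico 0 1 = {0} := rfl
    rw [h01, Finset.sum_singleton, hd0]
    norm_num
  rw [hsum]
  have hfin : C ^ 2 * (1 / p n - 1) = C ^ 2 / p n - C ^ 2 := by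
    rw [mul_sub, mul_one, mul_one_div]
  have hsum2 : ∑ j ∈ Finset.Ico 1 n, d j ^ 2 * (1 / p j - 1 / p (j + 1))
      = ∑ j ∈ Finset.Ico 1 n, (C - Q j) ^ 2 * (1 / p j - 1 / p (j + 1)) := rfl
  rw [hsum2] at *
  linarith [hfin]

private lemma integral_piecewise (n : ℕ) (p : ℕ → ℝ) (hp0 : p 0 = 0)
    (hmono : ∀ i < n, p i < p (i + 1)) (hpn1 : p n ≤ 1) (c : ℕ → ℝ) (C : ℝ) :
    (∫ u in Set.Ico (0 : ℝ) 1,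
        ((∑ j ∈ Finset.range n, if u < p (j + 1) then c j else 0) - C) ^ 2)
      = ∑ i ∈ Finset.range n,
          ((∑ j ∈ Finset.Ico i n, c j) - C) ^ 2 * (p (i + 1) - p i) + C ^ 2 * (1 - p n) := by
  set F : ℝ → ℝ := fun u =>
    ((∑ j ∈ Finset.range n, if u < p (j + 1) then c j else 0) - C) ^ 2 with hF
  have hmonoLe : ∀ j ≤ n, ∀ i ≤ j, p i ≤ p j := by
    intro j hj
    induction j with
    | zero => intro i hi; simp [Nat.le_zero.mp hi]
    | succ k ih =>
      intro i hi
      rcases Nat.lt_succ_iff_lt_or_eq.mp (Nat.lt_succ_of_le hi) with h | h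
      · exact le_trans (ih (le_trans (Nat.le_succ k) hj) i (Nat.lt_succ_iff.mp h))
          (hmono k (Nat.lt_of_succ_le hj)).le
      · exact le_of_eq (congrArg p h)
  have hpiece : ∀ i, i < n → Set.EqOn F
      (fun _ => ((∑ j ∈ Finset.Ico i n, c j) - C) ^ 2) (Set.Ico (p i) (p (i + 1))) := by
    intro i hi u hu
    have hinner : (∑ j ∈ Finset.range n, if u < p (j + 1) then c j else 0)
        = ∑ j ∈ Finset.Ico i n, c j := by
      rw [Finset.range_eq_Ico, ← Finset.sum_Ico_consecutive _ (Nat.zero_le i) hi.le]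
      have hA : ∑ j ∈ Finset.Ico 0 i, (if u < p (j + 1) then c j else 0) = 0 :=
        Finset.sum_eq_zero (fun j hj => by
          have hji : j + 1 ≤ i := (Finset.mem_Ico.mp hj).2
          have hle : p (j + 1) ≤ p i := hmonoLe i hi.le (j + 1) hji
          rw [if_neg (not_lt.mpr (le_trans hle hu.1))])
      have hB : ∑ j ∈ Finset.Ico i n, (if u < p (j + 1) then c j else 0)
          = ∑ j ∈ Finset.Ico i n, c j :=
        Finset.sum_congr rfl (fun j hj => by
          obtain ⟨hij, hjn⟩ := Finset.mem_Ico.mp hj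
          have hle : p (i + 1) ≤ p (j + 1) :=
            hmonoLe (j + 1) (Nat.succ_le_of_lt hjn) (i + 1) (Nat.succ_le_succ hij)
          rw [if_pos (lt_of_lt_of_le hu.2 hle)])
      rw [hA, hB, zero_add]
    simp only [hF, hinner]
  have hlast : Set.EqOn F (fun _ => C ^ 2) (Set.Ico (p n) 1) := by
    intro u hu
    have hinner : (∑ j ∈ Finset.range n, if u < p (j + 1) then c j else 0) = 0 :=
      Finset.sum_eq_zero (fun j hj => by
        have hle : p (j + 1) ≤ p n :=
          hmonoLe n le_rfl (j + 1) (Nat.succ_le_of_lt (Finset.mem_range.mp hj))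
        rw [if_neg (not_lt.mpr (le_trans hle hu.1))])
    simp only [hF, hinner, zero_sub, neg_sq]
  have hIcoInt : ∀ (a b cc : ℝ), a ≤ b → Set.EqOn F (fun _ => cc) (Set.Ico a b) →
      ∫ u in Set.Ico a b, F u = cc * (b - a) := by
    intro a b cc hab heq
    rw [setIntegral_congr_fun measurableSet_Ico heq, setIntegral_const, measureReal_def, Real.volume_Ico,
      ENNReal.toReal_ofReal (by linarith), smul_eq_mul, mul_comm]
  have hIcoIntOn : ∀ (a b cc : ℝ), Set.EqOn F (fun _ => cc) (Set.Ico a b) →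
      IntegrableOn F (Set.Ico a b) := by
    intro a b cc heq
    exact ((integrableOn_const (C := cc) measure_Ico_lt_top.ne)).congr_fun
      heq.symm measurableSet_Ico
  have hsplit : ∀ k, k ≤ n → IntegrableOn F (Set.Ico 0 (p k)) ∧
      ∫ u in Set.Ico 0 (p k), F u
        = ∑ i ∈ Finset.range k, ((∑ j ∈ Finset.Ico i n, c j) - C) ^ 2 * (p (i + 1) - p i) := by
    intro k
    induction k with
    | zero =>
      intro _
      rw [hp0]
      constructor
      · simpa [Set.Ico_self] using (integrableOn_empty (f := F) (μ := volume))
      · simp [Set.Ico_self]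
    | succ k ih =>
      intro hk
      have hk' : k ≤ n := (Nat.lt_of_succ_le hk).le
      obtain ⟨ihInt, ihVal⟩ := ih hk'
      have h0k : (0 : ℝ) ≤ p k := by
        have := hmonoLe k hk' 0 (Nat.zero_le k); rw [hp0] at this; exact this
      have hkk1 : p k ≤ p (k + 1) := (hmono k (Nat.lt_of_succ_le hk)).le
      have hu : Set.Ico (0 : ℝ) (p k) ∪ Set.Ico (p k) (p (k + 1)) = Set.Ico 0 (p (k + 1)) :=
        Set.Ico_union_Ico_eq_Ico h0k hkk1
      have heq := hpiece k (Nat.lt_of_succ_le hk)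
      have hInt2 : IntegrableOn F (Set.Ico (p k) (p (k + 1))) := hIcoIntOn _ _ _ heq
      constructor
      · rw [← hu]; exact ihInt.union hInt2
      · rw [← hu, setIntegral_union Set.Ico_disjoint_Ico_same
          measurableSet_Ico ihInt hInt2, ihVal, hIcoInt _ _ _ hkk1 heq,
          Finset.sum_range_succ]
  obtain ⟨hIntn, hValn⟩ := hsplit n le_rfl
  have h0n : (0 : ℝ) ≤ p n := by
    have := hmonoLe n le_rfl 0 (Nat.zero_le n); rw [hp0] at this; exact this
  have hu2 : Set.Ico (0 : ℝ) (p n) ∪ Set.Ico (p n) 1 = Set.Ico 0 1 :=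
    Set.Ico_union_Ico_eq_Ico h0n hpn1
  have hInt2 : IntegrableOn F (Set.Ico (p n) 1) := hIcoIntOn _ _ _ hlast
  calc (∫ u in Set.Ico (0 : ℝ) 1, F u)
      = (∫ u in Set.Ico (0 : ℝ) (p n), F u) + ∫ u in Set.Ico (p n) 1, F u := by
        rw [← hu2, setIntegral_union Set.Ico_disjoint_Ico_same
          measurableSet_Ico hIntn hInt2]
    _ = ∑ i ∈ Finset.range n, ((∑ j ∈ Finset.Ico i n, c j) - C) ^ 2 * (p (i + 1) - p i)
          + C ^ 2 * (1 - p n) := by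
        rw [hValn, hIcoInt _ _ _ hpn1 hlast]

/-- Variance of the new estimator: with the setup of the unbiasedness lemma,
`Var[ê] = q(S)²(1/pₙ − 1) + ∑_{j=1}^{n−1} (q(S) − q(D(S;p_j,r)))²(1/p_j − 1/p_{j+1})`. -/
theorem stmt_3 {α : Type*} [DecidableEq α] (S : Finset α) (hS : S.Nonempty)
    (r : α → ℝ) (hr : ∀ s ∈ S, r s ∈ Set.Ioc (0 : ℝ) 1)
    (n : ℕ) (hn : 1 ≤ n) (p : ℕ → ℝ) (hp0 : p 0 = 0)
    (hmono : ∀ i < n, p i < p (i + 1))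
    (himg : S.image r = (Finset.range n).image (fun j => p (j + 1)))
    (q : Finset α → ℝ) (hq0 : q (∅ : Finset α) = 0) :
    (∫ u in Set.Ico (0 : ℝ) 1,
        ((∑ j ∈ Finset.range n,
          if u < p (j + 1) then
            (q (S.filter (fun s => p j < r s)) - q (S.filter (fun s => p (j + 1) < r s)))
              / p (j + 1)
          else 0) - q S) ^ 2)
      = q S ^ 2 * (1 / p n - 1)
        + ∑ j ∈ Finset.Ico 1 n,
            (q S - q (S.filter (fun s => p j < r s))) ^ 2 * (1 / p j - 1 / p (j + 1)) := by
  have hmonoLe : ∀ j ≤ n, ∀ i ≤ j, p i ≤ p j := by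
    intro j hj
    induction j with
    | zero => intro i hi; simp [Nat.le_zero.mp hi]
    | succ k ih =>
      intro i hi
      rcases Nat.lt_succ_iff_lt_or_eq.mp (Nat.lt_succ_of_le hi) with h | h
      · exact le_trans (ih (le_trans (Nat.le_succ k) hj) i (Nat.lt_succ_iff.mp h))
          (hmono k (Nat.lt_of_succ_le hj)).le
      · exact le_of_eq (congrArg p h)
  have hpne : ∀ j < n, p (j + 1) ≠ 0 := by
    intro j hj
    have h01 : p 0 < p 1 := hmono 0 hn
    have h1j : p 1 ≤ p (j + 1) := hmonoLe (j + 1) (Nat.succ_le_of_lt hj) 1 (Nat.succ_le_succ (Nat.zero_le j))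
    rw [hp0] at h01
    exact ne_of_gt (lt_of_lt_of_le h01 h1j)
  -- p n ≤ 1
  have hpn_mem : p n ∈ (Finset.range n).image (fun j => p (j + 1)) := by
    refine Finset.mem_image.mpr ⟨n - 1, Finset.mem_range.mpr (Nat.sub_lt hn Nat.one_pos), ?_⟩
    rw [Nat.sub_add_cancel hn]
  have hpn1 : p n ≤ 1 := by
    rw [← himg] at hpn_mem
    obtain ⟨s, hsS, hrs⟩ := Finset.mem_image.mp hpn_mem
    exact hrs ▸ (hr s hsS).2
  -- every sampling rate is at most p n
  have hrle : ∀ s ∈ S, r s ≤ p n := by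
    intro s hs
    have : r s ∈ S.image r := Finset.mem_image_of_mem r hs
    rw [himg] at this
    obtain ⟨j, hj, hpj⟩ := Finset.mem_image.mp this
    rw [← hpj]
    exact hmonoLe n le_rfl (j + 1) (Nat.succ_le_of_lt (Finset.mem_range.mp hj))
  have hQn : q (S.filter (fun s => p n < r s)) = 0 := by
    have : S.filter (fun s => p n < r s) = ∅ :=
      Finset.filter_eq_empty_iff.mpr (fun {s} hs => not_lt.mpr (hrle s hs))
    rw [this, hq0]
  have hQ0 : q (S.filter (fun s => p 0 < r s)) = q S := by
    have : S.filter (fun s => p 0 < r s) = S :=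
      Finset.filter_true_of_mem (fun s hs => by rw [hp0]; exact (hr s hs).1)
    rw [this]
  exact (integral_piecewise n p hp0 hmono hpn1
      (fun j => (q (S.filter (fun s => p j < r s)) - q (S.filter (fun s => p (j + 1) < r s)))
        / p (j + 1)) (q S)).trans
    (final_alg n hn p (fun j => q (S.filter (fun s => p j < r s))) (q S) hp0 hpne hQ0 hQn)
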